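/- Let R be a semiring, V an R-module generated by (ε_i)_{i∈I} with |I| > 1, q: V → R a quadratic form, and b: V × V → R a symmetric bilinear form. If for any two distinct indices i, j the restriction of b to Rε_i + Rε_j is a companion of the restriction of q, then b is a companion of q. If additionally b(ε_i, ε_i) = 2q(ε_i) for every i ∈ I, then b is a balanced companion of q. -/

import Mathlib

/-- A (not necessarily symmetric) `R`-bilinear form on `V`. -/
def IsBilin {R : Type*} [CommSemiring R] {V : Type*} [AddCommMonoid V] [Module R V]
    (b : V → V → R) : Prop :=
  (∀ x y z : V, b (x + y) z = b x z + b y z) ∧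
  (∀ x y z : V, b x (y + z) = b x y + b x z) ∧
  (∀ (c : R) (x y : V), b (c • x) y = c * b x y) ∧
  (∀ (c : R) (x y : V), b x (c • y) = c * b x y)

/-- `b` is a (symmetric bilinear) companion of `q`. -/
def IsCompanion {R : Type*} [CommSemiring R] {V : Type*} [AddCommMonoid V] [Module R V]
    (q : V → R) (b : V → V → R) : Prop :=
  IsBilin b ∧ (∀ x y : V, b x y = b y x) ∧ ∀ x y : V, q (x + y) = q x + q y + b x y

/-- `q` is a quadratic form: homogeneous of degree 2 and admitting some companion. -/
def IsQuadForm {R : Type*} [CommSemiring R] {V : Type*} [AddCommMonoid V] [Module R V]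
    (q : V → R) : Prop :=
  (∀ (c : R) (x : V), q (c • x) = c ^ 2 * q x) ∧ ∃ b, IsCompanion q b

variable {R : Type*} [CommSemiring R] {V : Type*} [AddCommMonoid V] [Module R V]

/-- A symmetric bilinear form which is a companion of `q` on every submodule generated by
two distinct generators is a companion of `q`; if moreover it is balanced on the
generators, it is a balanced companion. -/
theorem stmt6 {I : Type*} [Nontrivial I] (ε : I → V)
    (hgen : Submodule.span R (Set.range ε) = ⊤)
    (q : V → R) (hq : IsQuadForm q)
    (b : V → V → R) (hbil : IsBilin b) (hsymm : ∀ x y : V, b x y = b y x)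
    (h : ∀ i j : I, i ≠ j →
      ∀ x ∈ Submodule.span R ({ε i, ε j} : Set V),
      ∀ y ∈ Submodule.span R ({ε i, ε j} : Set V),
        q (x + y) = q x + q y + b x y) :
    IsCompanion q b ∧
    ((∀ i : I, b (ε i) (ε i) = 2 * q (ε i)) → ∀ x : V, b x x = 2 * q x) := by
  obtain ⟨hqhom, b₀, hb₀bil, hb₀symm, hb₀comp⟩ := hq
  -- basic facts
  have q0 : q (0 : V) = 0 := by
    have := hqhom 0 0
    simpa using this
  have bz : ∀ x : V, b x 0 = 0 := fun x => by
    have := hbil.2.2.2 (0 : R) x 0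
    simpa using this
  have b₀z : ∀ x : V, b₀ x 0 = 0 := fun x => by
    have := hb₀bil.2.2.2 (0 : R) x 0
    simpa using this
  -- the key pointwise statement
  set T : V → V → Prop := fun x y => q x + q y + b₀ x y = q x + q y + b x y with hT
  -- base case: on scalar multiples of generators
  have base : ∀ (i j : I) (c d : R), T (c • ε i) (d • ε j) := by
    intro i j c d
    have key : ∀ (i j : I), i ≠ j → ∀ (c d : R), T (c • ε i) (d • ε j) := by
      intro i j hij c d
      have hmi : ε i ∈ Submodule.span R ({ε i, ε j} : Set V) :=
        Submodule.subset_span (Set.mem_insert _ _)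
      have hmj : ε j ∈ Submodule.span R ({ε i, ε j} : Set V) :=
        Submodule.subset_span (Set.mem_insert_of_mem _ rfl)
      have h1 := h i j hij (c • ε i) (Submodule.smul_mem _ c hmi)
        (d • ε j) (Submodule.smul_mem _ d hmj)
      have h2 := hb₀comp (c • ε i) (d • ε j)
      simp only [hT]
      rw [← h2, h1]
    by_cases hij : i = j
    · subst hij
      obtain ⟨k, hk⟩ := exists_ne i
      have hki : i ≠ k := fun e => hk e.symm
      have hmi : ε i ∈ Submodule.span R ({ε i, ε k} : Set V) :=
        Submodule.subset_span (Set.mem_insert _ _)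
      have h1 := h i k hki (c • ε i) (Submodule.smul_mem _ c hmi)
        (d • ε i) (Submodule.smul_mem _ d hmi)
      have h2 := hb₀comp (c • ε i) (d • ε i)
      simp only [hT]
      rw [← h2, h1]
    · exact key i j hij c d
  -- symmetry of T
  have tsymm : ∀ x y : V, T x y → T y x := by
    intro x y hxy
    simp only [hT] at hxy ⊢
    calc q y + q x + b₀ y x = q x + q y + b₀ x y := by rw [hb₀symm x y]; ring
      _ = q x + q y + b x y := hxy
      _ = q y + q x + b y x := by rw [hsymm x y]; ring
  -- additivity of T in the first argument
  have taddl : ∀ x₁ x₂ y : V, T x₁ y → T x₂ y → T (x₁ + x₂) y := by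
    intro x₁ x₂ y h1 h2
    simp only [hT] at h1 h2 ⊢
    have e0 : q (x₁ + x₂) = q x₁ + q x₂ + b₀ x₁ x₂ := hb₀comp _ _
    calc q (x₁ + x₂) + q y + b₀ (x₁ + x₂) y
        = (q x₁ + q y + b₀ x₁ y) + (q x₂ + b₀ x₁ x₂ + b₀ x₂ y) := by
          rw [e0, hb₀bil.1]; ring
      _ = (q x₁ + q y + b x₁ y) + (q x₂ + b₀ x₁ x₂ + b₀ x₂ y) := by rw [h1]
      _ = (q x₂ + q y + b₀ x₂ y) + (q x₁ + b₀ x₁ x₂ + b x₁ y) := by ring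
      _ = (q x₂ + q y + b x₂ y) + (q x₁ + b₀ x₁ x₂ + b x₁ y) := by rw [h2]
      _ = q (x₁ + x₂) + q y + b (x₁ + x₂) y := by rw [e0, hbil.1]; ring
  have taddr : ∀ x y₁ y₂ : V, T x y₁ → T x y₂ → T x (y₁ + y₂) := fun x y₁ y₂ h1 h2 =>
    tsymm _ _ (taddl y₁ y₂ x (tsymm _ _ h1) (tsymm _ _ h2))
  have tz : ∀ x : V, T x 0 := by
    intro x
    simp only [hT, bz, b₀z]
  -- the additive monoid generated by scalar multiples of generators is everything
  set G : Set V := {v | ∃ (i : I) (c : R), v = c • ε i} with hGdef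
  have hsmul : ∀ (c : R) (v : V), v ∈ AddSubmonoid.closure G →
      c • v ∈ AddSubmonoid.closure G := by
    intro c v hv
    induction hv using AddSubmonoid.closure_induction with
    | mem w hw =>
      obtain ⟨i, d, rfl⟩ := hw
      rw [smul_smul]
      exact AddSubmonoid.subset_closure ⟨i, c * d, rfl⟩
    | zero => rw [smul_zero]; exact zero_mem _
    | add u v hu hv hpu hpv => rw [smul_add]; exact add_mem hpu hpv
  have hG : ∀ x : V, x ∈ AddSubmonoid.closure G := by
    intro x
    have hx : x ∈ Submodule.span R (Set.range ε) := by rw [hgen]; trivial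
    induction hx using Submodule.span_induction with
    | mem v hv =>
      obtain ⟨i, rfl⟩ := hv
      exact AddSubmonoid.subset_closure ⟨i, 1, (one_smul R _).symm⟩
    | zero => exact zero_mem _
    | add u v hu hv hpu hpv => exact add_mem hpu hpv
    | smul c v hv hpv => exact hsmul c v hpv
  -- T holds everywhere
  have tall : ∀ x y : V, T x y := by
    have step1 : ∀ g ∈ G, ∀ y : V, T g y := by
      intro g hg y
      have hy := hG y
      induction hy using AddSubmonoid.closure_induction with
      | mem w hw =>
        obtain ⟨i, c, rfl⟩ := hg
        obtain ⟨j, d, rfl⟩ := hw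
        exact base i j c d
      | zero => exact tz g
      | add u v hu hv hpu hpv => exact taddr g u v hpu hpv
    intro x y
    have hx := hG x
    induction hx using AddSubmonoid.closure_induction with
    | mem w hw => exact step1 w hw y
    | zero => exact tsymm _ _ (tz y)
    | add u v hu hv hpu hpv => exact taddl u v y hpu hpv
  have hcomp : IsCompanion q b := by
    refine ⟨hbil, hsymm, fun x y => ?_⟩
    exact (hb₀comp x y).trans (tall x y)
  refine ⟨hcomp, fun hbal x => ?_⟩
  -- balanced part
  have hx : x ∈ Submodule.span R (Set.range ε) := by rw [hgen]; trivial
  induction hx using Submodule.span_induction with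
  | mem v hv => obtain ⟨i, rfl⟩ := hv; exact hbal i
  | zero =>
    have h0 : b (0 : V) (0 : V) = 0 := bz 0
    simp [h0, q0]
  | add u v hu hv hpu hpv =>
    have e1 : b (u + v) (u + v) = b u u + b u v + (b v u + b v v) := by
      rw [hbil.1, hbil.2.1, hbil.2.1]
    rw [e1, hpu, hpv, hsymm v u, hcomp.2.2 u v]; ring
  | smul c v hv hpv =>
    rw [hbil.2.2.1, hbil.2.2.2, hpv, hqhom]; ring
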